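/- Let a ∈ ℝ^d \ {0} with s = ‖a‖², let h : ℝ → ℝ be C², and define q(x) = x + h(aᵀx) a, so J_q(x) = I + h′(aᵀx) a aᵀ. Assume 1 + s h′(r) ≠ 0 on the domain and that g(r) = r + s h(r) is invertible on the relevant interval, and define β(t) = ( (1 + s h′(g⁻¹(t)))^{−2} − 1 ) / s. Let ψ : ℝ → ℝ satisfy ψ″(t) = β(t) and set R(z) = (1/2)‖z‖² + ψ(aᵀz). Then for every x in the domain, with z = q(x), the Hessian compatibility holds: ∇²R(z) = I + β(aᵀz) a aᵀ = [ J_q(x) J_q(x)ᵀ ]⁻¹. -/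

import Mathlib

open scoped RealInnerProductSpace

set_option maxHeartbeats 1000000 in
/-- rank-one nonlinear mixing: for `q(x) = x + h(aᵀx) a`, with
`β(t) = ((1 + s h'(g⁻¹(t)))⁻² - 1)/s`, `s = ‖a‖²`, `g(r) = r + s h(r)`, and
`R(z) = ½‖z‖² + ψ(aᵀz)` where `ψ'' = β`, the Jacobian is `J_q(x) = I + h'(aᵀx) a aᵀ` and
Hessian compatibility `∇²R(q x) = I + β(aᵀ q x) a aᵀ = [J_q(x) J_q(x)ᵀ]⁻¹` holds. -/
theorem rank_one_mixing_hessian_compatibility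
    {d : ℕ}
    (a : EuclideanSpace ℝ (Fin d)) (ha : a ≠ 0)
    (h h' : ℝ → ℝ) (hC2 : ContDiff ℝ 2 h) (hh' : ∀ t, HasDerivAt h (h' t) t)
    (hne : ∀ t : ℝ, 1 + ‖a‖ ^ 2 * h' t ≠ 0)
    (g : ℝ → ℝ) (hg : ∀ t, g t = t + ‖a‖ ^ 2 * h t)
    (ginv : ℝ → ℝ)
    (hginv : Function.LeftInverse ginv g ∧ Function.RightInverse ginv g)
    (β : ℝ → ℝ)
    (hβ : ∀ t, β t = (((1 + ‖a‖ ^ 2 * h' (ginv t)) ^ 2)⁻¹ - 1) / ‖a‖ ^ 2)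
    (ψ ψ' : ℝ → ℝ)
    (hψ' : ∀ t, HasDerivAt ψ (ψ' t) t) (hψ'' : ∀ t, HasDerivAt ψ' (β t) t)
    (q : EuclideanSpace ℝ (Fin d) → EuclideanSpace ℝ (Fin d))
    (hq : ∀ x, q x = x + h ⟪a, x⟫ • a)
    (R : EuclideanSpace ℝ (Fin d) → ℝ)
    (hR : ∀ z, R z = (1 / 2) * ‖z‖ ^ 2 + ψ ⟪a, z⟫) :
    ∀ x : EuclideanSpace ℝ (Fin d),
      HasFDerivAt q
        (ContinuousLinearMap.id ℝ _ + h' ⟪a, x⟫ • (innerSL ℝ a).smulRight a) x ∧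
      HasFDerivAt (gradient R)
        (ContinuousLinearMap.id ℝ _ + β ⟪a, q x⟫ • (innerSL ℝ a).smulRight a) (q x) ∧
      (ContinuousLinearMap.id ℝ _ + β ⟪a, q x⟫ • (innerSL ℝ a).smulRight a).comp
          ((ContinuousLinearMap.id ℝ _ + h' ⟪a, x⟫ • (innerSL ℝ a).smulRight a).comp
            (ContinuousLinearMap.adjoint
              (ContinuousLinearMap.id ℝ _ + h' ⟪a, x⟫ • (innerSL ℝ a).smulRight a)))
        = ContinuousLinearMap.id ℝ _ ∧
      ((ContinuousLinearMap.id ℝ _ + h' ⟪a, x⟫ • (innerSL ℝ a).smulRight a).comp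
          (ContinuousLinearMap.adjoint
            (ContinuousLinearMap.id ℝ _ + h' ⟪a, x⟫ • (innerSL ℝ a).smulRight a))).comp
          (ContinuousLinearMap.id ℝ _ + β ⟪a, q x⟫ • (innerSL ℝ a).smulRight a)
        = ContinuousLinearMap.id ℝ _ := by
  classical
  obtain ⟨hgl, hgr⟩ := hginv
  set P : (EuclideanSpace ℝ (Fin d)) →L[ℝ] (EuclideanSpace ℝ (Fin d)) := (innerSL ℝ a).smulRight a with hPdef
  have hs : (‖a‖ : ℝ) ^ 2 ≠ 0 := pow_ne_zero 2 (norm_ne_zero_iff.mpr ha)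
  -- composition of rank-one perturbations of the identity
  have hcomp : ∀ b c : ℝ,
      (ContinuousLinearMap.id ℝ (EuclideanSpace ℝ (Fin d)) + b • P).comp (ContinuousLinearMap.id ℝ (EuclideanSpace ℝ (Fin d)) + c • P)
        = ContinuousLinearMap.id ℝ (EuclideanSpace ℝ (Fin d)) + (b + c + b * c * ‖a‖ ^ 2) • P := by
    intro b c
    refine ContinuousLinearMap.ext fun v => ?_
    simp only [hPdef, ContinuousLinearMap.comp_apply, ContinuousLinearMap.add_apply,
      ContinuousLinearMap.smul_apply, ContinuousLinearMap.id_apply,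
      ContinuousLinearMap.smulRight_apply, innerSL_apply_apply, inner_add_right,
      real_inner_smul_right, real_inner_self_eq_norm_sq, smul_smul, smul_add]
    module
  -- self-adjointness
  have hadj : ∀ c : ℝ,
      ContinuousLinearMap.adjoint (ContinuousLinearMap.id ℝ (EuclideanSpace ℝ (Fin d)) + c • P)
        = ContinuousLinearMap.id ℝ (EuclideanSpace ℝ (Fin d)) + c • P := by
    intro c
    symm
    rw [ContinuousLinearMap.eq_adjoint_iff]
    intro x y
    simp only [hPdef, ContinuousLinearMap.add_apply, ContinuousLinearMap.smul_apply,
      ContinuousLinearMap.id_apply, ContinuousLinearMap.smulRight_apply, innerSL_apply_apply,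
      inner_add_left, inner_add_right, real_inner_smul_left, real_inner_smul_right]
    rw [real_inner_comm a x]
    ring
  -- generic derivative of x ↦ x + f ⟪a,x⟫ • a
  have hder : ∀ (f f' : ℝ → ℝ), (∀ t, HasDerivAt f (f' t) t) → ∀ x : (EuclideanSpace ℝ (Fin d)),
      HasFDerivAt (fun x : (EuclideanSpace ℝ (Fin d)) => x + f ⟪a, x⟫ • a)
        (ContinuousLinearMap.id ℝ (EuclideanSpace ℝ (Fin d)) + f' ⟪a, x⟫ • P) x := by
    intro f f' hf x
    have h1 : HasFDerivAt (fun x : (EuclideanSpace ℝ (Fin d)) => (⟪a, x⟫ : ℝ)) (innerSL ℝ a) x :=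
      (innerSL ℝ a).hasFDerivAt
    have h2 := ((hf ⟪a, x⟫).comp_hasFDerivAt x h1).smul_const a
    have h4 := (hasFDerivAt_id x).add h2
    refine HasFDerivAt.congr_fderiv h4 ?_
    refine ContinuousLinearMap.ext fun v => ?_
    simp [hPdef, smul_smul]
  -- gradient formula
  have hgrad : gradient R = fun z : (EuclideanSpace ℝ (Fin d)) => z + ψ' ⟪a, z⟫ • a := by
    funext z
    have hR' : R = fun w : (EuclideanSpace ℝ (Fin d)) => (1/2 : ℝ) * ⟪w, w⟫ + ψ ⟪a, w⟫ := by
      funext w; rw [hR, real_inner_self_eq_norm_sq]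
    have h1 : HasFDerivAt (fun w : (EuclideanSpace ℝ (Fin d)) => (⟪w, w⟫ : ℝ)) _ z :=
      (hasFDerivAt_id z).inner ℝ (hasFDerivAt_id z)
    have h2 := h1.const_mul (1/2 : ℝ)
    have h3 := (hψ' ⟪a, z⟫).comp_hasFDerivAt z ((innerSL ℝ a).hasFDerivAt)
    have h4 : HasFDerivAt R ((1/2 : ℝ) • ((fderivInnerCLM ℝ (z, z)).comp
        ((ContinuousLinearMap.id ℝ (EuclideanSpace ℝ (Fin d))).prod (ContinuousLinearMap.id ℝ (EuclideanSpace ℝ (Fin d)))))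
        + ψ' ⟪a, z⟫ • (innerSL ℝ a)) z := by
      rw [hR']; exact h2.add h3
    have h5 : HasGradientAt R (z + ψ' ⟪a, z⟫ • a) z := by
      rw [hasGradientAt_iff_hasFDerivAt]
      refine HasFDerivAt.congr_fderiv h4 ?_
      refine ContinuousLinearMap.ext fun v => ?_
      simp [InnerProductSpace.toDual_apply_apply, inner_add_left, real_inner_smul_left,
        fderivInnerCLM_apply, real_inner_comm z v]
      ring
    exact h5.gradient
  intro x
  set r : ℝ := ⟪a, x⟫ with hr
  set c : ℝ := h' r with hc
  -- ⟪a, q x⟫ = g r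
  have hqa : ⟪a, q x⟫ = g r := by
    rw [hq, hg]
    rw [inner_add_right, real_inner_smul_right, real_inner_self_eq_norm_sq]
    ring
  set b : ℝ := β ⟪a, q x⟫ with hb
  have hbval : b = (((1 + ‖a‖ ^ 2 * c) ^ 2)⁻¹ - 1) / ‖a‖ ^ 2 := by
    rw [hb, hβ, hqa, hgl r]
  have hcne : (1 + ‖a‖ ^ 2 * c) ≠ 0 := hne r
  -- key coefficient identity
  have hkey0 : ∀ s c : ℝ, s ≠ 0 → 1 + s * c ≠ 0 →
      (((1 + s * c) ^ 2)⁻¹ - 1) / s + (c + c + c * c * s)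
        + ((((1 + s * c) ^ 2)⁻¹ - 1) / s) * (c + c + c * c * s) * s = 0 := by
    intro s c hs hsc
    field_simp
    ring
  have hkey : b + (c + c + c * c * ‖a‖ ^ 2)
      + b * (c + c + c * c * ‖a‖ ^ 2) * ‖a‖ ^ 2 = 0 := by
    rw [hbval]
    exact hkey0 _ _ hs hcne
  have hJq : HasFDerivAt q (ContinuousLinearMap.id ℝ (EuclideanSpace ℝ (Fin d)) + c • P) x := by
    have := hder h h' hh' x
    have hqe : q = fun x : (EuclideanSpace ℝ (Fin d)) => x + h ⟪a, x⟫ • a := funext hq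
    rw [hqe]
    exact this
  have hJR : HasFDerivAt (gradient R) (ContinuousLinearMap.id ℝ (EuclideanSpace ℝ (Fin d)) + b • P) (q x) := by
    rw [hgrad]
    exact hder ψ' β hψ'' (q x)
  have hJJ : (ContinuousLinearMap.id ℝ (EuclideanSpace ℝ (Fin d)) + c • P).comp
      (ContinuousLinearMap.adjoint (ContinuousLinearMap.id ℝ (EuclideanSpace ℝ (Fin d)) + c • P))
      = ContinuousLinearMap.id ℝ (EuclideanSpace ℝ (Fin d)) + (c + c + c * c * ‖a‖ ^ 2) • P := by
    rw [hadj, hcomp]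
  refine ⟨hJq, hJR, ?_, ?_⟩
  · rw [hJJ, hcomp, hkey]; simp [zero_smul ℝ P]
  · rw [hJJ, hcomp]
    have : c + c + c * c * ‖a‖ ^ 2 + b + (c + c + c * c * ‖a‖ ^ 2) * b * ‖a‖ ^ 2 = 0 := by
      rw [← hkey]; ring
    rw [this]; simp [zero_smul ℝ P]
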